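/- arXiv:1705.03038 — 3 statements merged into one kernel-verified Lean document; each statement's English description precedes it below -/
import Mathlib

section
/- Let 1 ≤ k < m, let (λ_i, u_i) be an exact eigenpair of A with μ_i = 1/λ_i, and assume δ_{k,i} := min_{k<j≤m} |μ̃_j − μ_i| > 0. Let E_{m,k} be the A-orthogonal projection onto span{ũ_1, …, ũ_k}. Then ‖(I − E_{m,k}) P_K u_i‖_A ≤ (√(μ̃_{k+1})/δ_{k,i}) · ‖u_i − P_K u_i‖₂. -/
open Matrix

/-- The Euclidean (`L²`) norm on `ℝⁿ`: `‖x‖₂ = √(xᵀx)`. -/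
noncomputable def l2N {n : ℕ} (x : Fin n → ℝ) : ℝ := Real.sqrt (x ⬝ᵥ x)

/-- The energy norm induced by the matrix `A`: `‖x‖_A = √(xᵀAx)`. -/
noncomputable def aN {n : ℕ} (A : Matrix (Fin n) (Fin n) ℝ) (x : Fin n → ℝ) : ℝ :=
  Real.sqrt (x ⬝ᵥ (A *ᵥ x))

/-- `η_K = sup_{‖g‖₂ = 1} ‖(I - P_K) A⁻¹ g‖_A`, where `P` is the `A`-orthogonal
projection onto the subspace `K`. -/
noncomputable def etaK {n : ℕ} (A : Matrix (Fin n) (Fin n) ℝ)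
    (P : (Fin n → ℝ) →ₗ[ℝ] (Fin n → ℝ)) : ℝ :=
  sSup ((fun g => aN A ((A⁻¹ *ᵥ g) - P (A⁻¹ *ᵥ g))) '' {g | l2N g = 1})

/-- Self dot product is nonnegative. -/
lemma dp_self_nonneg {n : ℕ} (v : Fin n → ℝ) : 0 ≤ v ⬝ᵥ v :=
  Finset.sum_nonneg fun i _ => mul_self_nonneg (v i)

/-- Dot product with a finite linear combination. -/
lemma dp_sum {n m : ℕ} (x : Fin n → ℝ) (s : Finset (Fin m)) (c : Fin m → ℝ)
    (f : Fin m → (Fin n → ℝ)) :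
    x ⬝ᵥ (∑ i ∈ s, c i • f i) = ∑ i ∈ s, c i * (x ⬝ᵥ f i) := by
  induction s using Finset.induction with
  | empty => simp
  | insert _ _ h ih =>
      rw [Finset.sum_insert h, Finset.sum_insert h, dotProduct_add, ih,
        dotProduct_smul, smul_eq_mul]

/-- Dot product through `A` with a finite linear combination. -/
lemma dpA_sum {n m : ℕ} (A : Matrix (Fin n) (Fin n) ℝ) (x : Fin n → ℝ)
    (s : Finset (Fin m)) (c : Fin m → ℝ) (f : Fin m → (Fin n → ℝ)) :
    x ⬝ᵥ (A *ᵥ (∑ i ∈ s, c i • f i)) = ∑ i ∈ s, c i * (x ⬝ᵥ (A *ᵥ f i)) := by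
  induction s using Finset.induction with
  | empty => simp
  | insert _ _ h ih =>
      rw [Finset.sum_insert h, Finset.sum_insert h, mulVec_add, dotProduct_add, ih,
        mulVec_smul, dotProduct_smul, smul_eq_mul]

/-- The estimate (3.29):
`‖(I − E_{m,k}) P_K u_i‖_A ≤ (√(μ̃_{k+1})/δ_{k,i}) ‖u_i − P_K u_i‖₂`. -/
theorem stmt14 {n m : ℕ} (A : Matrix (Fin n) (Fin n) ℝ) (hA : A.PosDef)
    -- `K` is an `m`-dimensional subspace of `ℝⁿ`
    (K : Submodule ℝ (Fin n → ℝ)) (hK : Module.finrank ℝ K = m)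
    -- `P` is the `A`-orthogonal (Galerkin) projection onto `K`
    (P : (Fin n → ℝ) →ₗ[ℝ] (Fin n → ℝ))
    (hPmem : ∀ x, P x ∈ K)
    (hPproj : ∀ x, ∀ y ∈ K, (P x) ⬝ᵥ (A *ᵥ y) = x ⬝ᵥ (A *ᵥ y))
    -- the Ritz pairs `(λ̃_j, ũ_j)` of `A` on `K`, with `A`-orthonormal Ritz vectors
    (tlam : Fin m → ℝ) (tu : Fin m → (Fin n → ℝ)) (htmono : Monotone tlam)
    (htu : ∀ j, tu j ∈ K)
    (hRitz : ∀ j, ∀ v ∈ K, ((A *ᵥ tu j) - tlam j • tu j) ⬝ᵥ v = 0)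
    (htortho : ∀ i j, tu i ⬝ᵥ (A *ᵥ tu j) = if i = j then (1 : ℝ) else 0)
    -- `1 ≤ k < m`
    (k : ℕ) (hk : 1 ≤ k) (hkm : k < m)
    -- `(λ_i, u_i)` is an exact eigenpair of `A`
    (lam : ℝ) (u : Fin n → ℝ) (hu : u ≠ 0) (heig : A *ᵥ u = lam • u)
    -- `δ_{k,i} > 0` is (a lower bound for) `min_{k < j ≤ m} |μ̃_j − μ_i|`,
    -- where `μ_i = 1/λ_i`, `μ̃_j = 1/λ̃_j`
    (δ : ℝ) (hδpos : 0 < δ)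
    (hδ : ∀ j : Fin m, k ≤ (j : ℕ) → δ ≤ |1 / tlam j - 1 / lam|)
    -- `E` is the `A`-orthogonal projection `E_{m,k}` onto `span{ũ_1, …, ũ_k}`
    (E : (Fin n → ℝ) →ₗ[ℝ] (Fin n → ℝ))
    (hEmem : ∀ x, E x ∈
      Submodule.span ℝ (Set.range fun i : Fin k => tu (Fin.castLE hkm.le i)))
    (hEproj : ∀ x, ∀ y ∈
      Submodule.span ℝ (Set.range fun i : Fin k => tu (Fin.castLE hkm.le i)),
      (E x) ⬝ᵥ (A *ᵥ y) = x ⬝ᵥ (A *ᵥ y)) :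
    aN A (P u - E (P u)) ≤
      Real.sqrt (1 / tlam ⟨k, hkm⟩) / δ * l2N (u - P u) := by
  classical
  set S := Submodule.span ℝ (Set.range fun i : Fin k => tu (Fin.castLE hkm.le i)) with hSdef
  -- symmetry of the energy bilinear form
  have hT : Aᵀ = A := by
    rw [← conjTranspose_eq_transpose_of_trivial]; exact hA.isHermitian
  have hBsymm : ∀ x y : Fin n → ℝ, x ⬝ᵥ (A *ᵥ y) = y ⬝ᵥ (A *ᵥ x) := by
    intro x y
    rw [dotProduct_comm, dotProduct_mulVec, ← mulVec_transpose, hT]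
  -- reformulated Ritz property
  have hR : ∀ j, ∀ v ∈ K, tu j ⬝ᵥ (A *ᵥ v) = tlam j * (tu j ⬝ᵥ v) := by
    intro j v hv
    have h := hRitz j v hv
    rw [sub_dotProduct, smul_dotProduct, sub_eq_zero, smul_eq_mul] at h
    calc tu j ⬝ᵥ (A *ᵥ v) = (A *ᵥ tu j) ⬝ᵥ v := by rw [hBsymm, dotProduct_comm]
      _ = tlam j * (tu j ⬝ᵥ v) := h
  -- ℓ² orthogonality of Ritz vectors
  have hl2 : ∀ i j, tlam j * (tu j ⬝ᵥ tu i) = if j = i then (1:ℝ) else 0 := by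
    intro i j
    rw [← hR j (tu i) (htu i), htortho]
  -- positivity of Ritz values
  have htpos : ∀ j, 0 < tlam j := by
    intro j
    have h := hl2 j j
    simp at h
    have h2 : 0 ≤ tu j ⬝ᵥ tu j := dp_self_nonneg _
    nlinarith
  have htkpos : 0 < tlam ⟨k, hkm⟩ := htpos _
  -- positivity of lam
  have hupos : 0 < u ⬝ᵥ u := by
    rcases (dp_self_nonneg u).lt_or_eq with h | h
    · exact h
    · exact absurd (dotProduct_self_eq_zero.mp h.symm) hu
  have hlampos : 0 < lam := by
    have h := hA.dotProduct_mulVec_pos hu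
    simp only [star_trivial] at h
    rw [heig, dotProduct_smul, smul_eq_mul] at h
    nlinarith
  -- linear independence and span of Ritz vectors
  have hind : LinearIndependent ℝ tu := by
    rw [Fintype.linearIndependent_iff]
    intro g hg i
    have h1 : tu i ⬝ᵥ (A *ᵥ (∑ j, g j • tu j)) = 0 := by rw [hg]; simp
    rw [dpA_sum] at h1
    simpa [htortho, mul_ite] using h1
  have hspan : Submodule.span ℝ (Set.range tu) = K := by
    apply Submodule.eq_of_le_of_finrank_le
    · rw [Submodule.span_le]
      rintro _ ⟨j, rfl⟩
      exact htu j
    · rw [hK, finrank_span_eq_card hind, Fintype.card_fin]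
  -- the residual q and its coefficients
  set q := P u - E (P u) with hqdef
  clear_value q
  have hSK : S ≤ K := by
    rw [hSdef, Submodule.span_le]
    rintro _ ⟨i, rfl⟩
    exact htu _
  have hqK : q ∈ K := by
    rw [hqdef]; exact K.sub_mem (hPmem u) (hSK (hEmem (P u)))
  have hqS : ∀ y ∈ S, q ⬝ᵥ (A *ᵥ y) = 0 := by
    intro y hy
    rw [hqdef, sub_dotProduct, hEproj (P u) y hy, sub_self]
  obtain ⟨d, hd⟩ := (Submodule.mem_span_range_iff_exists_fun ℝ).mp (hspan ▸ hqK)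
  have hdj : ∀ j, tu j ⬝ᵥ (A *ᵥ q) = d j := by
    intro j
    rw [← hd, dpA_sum]
    simp [htortho, mul_ite]
  -- coefficients vanish below k
  have hdlow : ∀ j : Fin m, (j : ℕ) < k → d j = 0 := by
    intro j hj
    have hmem : tu j ∈ S := by
      rw [hSdef]
      apply Submodule.subset_span
      exact ⟨⟨(j : ℕ), hj⟩, rfl⟩
    rw [← hdj j, hBsymm]
    exact hqS (tu j) hmem
  -- residual r
  set r := u - P u with hrdef
  clear_value r
  -- coefficient identities for j ≥ k
  have hdhigh : ∀ j : Fin m, k ≤ (j : ℕ) →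
      tu j ⬝ᵥ r = d j * (1 / lam - 1 / tlam j) := by
    intro j hj
    -- tu j is A-orthogonal to S
    have horthS0 : ∀ y ∈ S, tu j ⬝ᵥ (A *ᵥ y) = 0 := by
      intro y hy
      rw [hSdef] at hy
      induction hy using Submodule.span_induction with
      | mem y hy =>
          obtain ⟨i, rfl⟩ := hy
          rw [htortho]
          rw [if_neg]
          intro hji
          rw [hji] at hj
          simp only [Fin.coe_castLE] at hj
          omega
      | zero => simp
      | add y z _ _ hy hz => rw [mulVec_add, dotProduct_add, hy, hz, add_zero]
      | smul c y _ hy => rw [mulVec_smul, dotProduct_smul, hy, smul_zero]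
    have horthS : tu j ⬝ᵥ (A *ᵥ E (P u)) = 0 := horthS0 _ (hEmem (P u))
    have hd1 : d j = tu j ⬝ᵥ (A *ᵥ P u) := by
      rw [← hdj j, hqdef, mulVec_sub, dotProduct_sub, horthS, sub_zero]
    have hd2 : d j = tlam j * (tu j ⬝ᵥ P u) := by
      rw [hd1]; exact hR j (P u) (hPmem u)
    have hd3 : d j = lam * (tu j ⬝ᵥ u) := by
      rw [hd1, hBsymm, hPproj u (tu j) (htu j), hBsymm, heig, dotProduct_smul, smul_eq_mul]
    have hlam0 : lam ≠ 0 := ne_of_gt hlampos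
    have htl0 : tlam j ≠ 0 := ne_of_gt (htpos j)
    have h4 : tu j ⬝ᵥ u = d j / lam := by rw [hd3]; field_simp
    have h5 : tu j ⬝ᵥ P u = d j / tlam j := by rw [hd2]; field_simp
    rw [hrdef, dotProduct_sub, h4, h5]
    field_simp
  -- Bessel inequality: ∑ tlam j * (tu j ⬝ᵥ r)² ≤ r ⬝ᵥ r
  set c : Fin m → ℝ := fun j => tlam j * (tu j ⬝ᵥ r) with hcdef
  clear_value c
  set w : Fin n → ℝ := ∑ j, c j • tu j with hwdef
  clear_value w
  have hrw : r ⬝ᵥ w = ∑ j, tlam j * (tu j ⬝ᵥ r) ^ 2 := by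
    rw [hwdef, dp_sum]
    apply Finset.sum_congr rfl
    intro j _
    rw [dotProduct_comm r (tu j), hcdef]
    ring
  have hww : w ⬝ᵥ w = ∑ j, tlam j * (tu j ⬝ᵥ r) ^ 2 := by
    have hwtu : ∀ j, w ⬝ᵥ tu j = c j / tlam j := by
      intro j
      rw [dotProduct_comm, hwdef, dp_sum]
      have key : ∀ l : Fin m, c l * (tu j ⬝ᵥ tu l) = if j = l then c l / tlam j else 0 := by
        intro l
        have h := hl2 l j
        have h2 : tu j ⬝ᵥ tu l = (if j = l then (1:ℝ) else 0) / tlam j := by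
          rw [eq_div_iff (htpos j).ne', mul_comm]
          exact hl2 l j
        rw [h2]
        split <;> simp [div_eq_mul_inv]
      calc ∑ l, c l * (tu j ⬝ᵥ tu l) = ∑ l, if j = l then c l / tlam j else 0 :=
            Finset.sum_congr rfl fun l _ => key l
        _ = c j / tlam j := by
            rw [Finset.sum_ite_eq Finset.univ j (fun l => c l / tlam j)]
            exact if_pos (Finset.mem_univ j)
    conv_lhs => rw [hwdef, dp_sum]
    apply Finset.sum_congr rfl
    intro j _
    rw [← hwdef, hwtu j, hcdef]
    have := htpos j
    field_simp
  have hBessel : ∑ j, tlam j * (tu j ⬝ᵥ r) ^ 2 ≤ r ⬝ᵥ r := by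
    have hexp : (r - w) ⬝ᵥ (r - w) = r ⬝ᵥ r - 2 * (r ⬝ᵥ w) + w ⬝ᵥ w := by
      rw [sub_dotProduct, dotProduct_sub, dotProduct_sub, dotProduct_comm w r]
      ring
    have h0 := dp_self_nonneg (r - w)
    rw [hexp] at h0
    linarith [hrw, hww]
  -- energy norm of q in coefficients
  have hqAq : q ⬝ᵥ (A *ᵥ q) = ∑ j, d j ^ 2 := by
    have h1 : q ⬝ᵥ (A *ᵥ q) = q ⬝ᵥ (A *ᵥ (∑ i, d i • tu i)) := by rw [hd]
    rw [h1, dpA_sum]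
    apply Finset.sum_congr rfl
    intro j _
    rw [hBsymm q (tu j), hdj j]
    ring
  -- termwise estimate
  have hterm : ∀ j : Fin m, d j ^ 2 ≤
      1 / tlam ⟨k, hkm⟩ / δ ^ 2 * (tlam j * (tu j ⬝ᵥ r) ^ 2) := by
    intro j
    by_cases hj : k ≤ (j : ℕ)
    · have h7 := hδ j hj
      have h8 := abs_nonneg (1 / tlam j - 1 / lam)
      have h6 : δ ^ 2 ≤ (1 / tlam j - 1 / lam) ^ 2 := by
        nlinarith [sq_abs (1 / tlam j - 1 / lam)]
      have h9 : (tu j ⬝ᵥ r) ^ 2 = d j ^ 2 * (1 / tlam j - 1 / lam) ^ 2 := by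
        rw [hdhigh j hj]; ring
      have hA1 : δ ^ 2 * d j ^ 2 ≤ (tu j ⬝ᵥ r) ^ 2 := by
        rw [h9]
        nlinarith [sq_nonneg (d j)]
      have hmono : tlam ⟨k, hkm⟩ ≤ tlam j := htmono (show (⟨k, hkm⟩ : Fin m) ≤ j from hj)
      rw [div_div, div_mul_eq_mul_div, le_div_iff₀ (by positivity), one_mul]
      calc d j ^ 2 * (tlam ⟨k, hkm⟩ * δ ^ 2) ≤ d j ^ 2 * (tlam j * δ ^ 2) := by
            apply mul_le_mul_of_nonneg_left _ (sq_nonneg _)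
            exact mul_le_mul_of_nonneg_right hmono (sq_nonneg δ)
        _ = tlam j * (δ ^ 2 * d j ^ 2) := by ring
        _ ≤ tlam j * (tu j ⬝ᵥ r) ^ 2 := mul_le_mul_of_nonneg_left hA1 (htpos j).le
    · have h12 : (0:ℝ) ≤ 1 / tlam ⟨k, hkm⟩ / δ ^ 2 * (tlam j * (tu j ⬝ᵥ r) ^ 2) := by
        have h10 := htpos j
        positivity
      rw [hdlow j (by omega)]
      simpa using h12
  -- combine
  have hkey : q ⬝ᵥ (A *ᵥ q) ≤ 1 / tlam ⟨k, hkm⟩ / δ ^ 2 * (r ⬝ᵥ r) := by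
    rw [hqAq]
    calc ∑ j, d j ^ 2 ≤ ∑ j, 1 / tlam ⟨k, hkm⟩ / δ ^ 2 * (tlam j * (tu j ⬝ᵥ r) ^ 2) :=
          Finset.sum_le_sum fun j _ => hterm j
      _ = 1 / tlam ⟨k, hkm⟩ / δ ^ 2 * ∑ j, tlam j * (tu j ⬝ᵥ r) ^ 2 := by
          rw [Finset.mul_sum]
      _ ≤ 1 / tlam ⟨k, hkm⟩ / δ ^ 2 * (r ⬝ᵥ r) := by
          apply mul_le_mul_of_nonneg_left hBessel
          positivity
  -- conclude via square roots
  show Real.sqrt (q ⬝ᵥ (A *ᵥ q)) ≤ Real.sqrt (1 / tlam ⟨k, hkm⟩) / δ * Real.sqrt (r ⬝ᵥ r)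
  calc Real.sqrt (q ⬝ᵥ (A *ᵥ q)) ≤ Real.sqrt (1 / tlam ⟨k, hkm⟩ / δ ^ 2 * (r ⬝ᵥ r)) :=
        Real.sqrt_le_sqrt hkey
    _ = Real.sqrt (1 / tlam ⟨k, hkm⟩) / δ * Real.sqrt (r ⬝ᵥ r) := by
        rw [Real.sqrt_mul (by positivity),
          Real.sqrt_div (by positivity : (0:ℝ) ≤ 1 / tlam ⟨k, hkm⟩),
          Real.sqrt_sq hδpos.le]
end

section
/- Let 1 ≤ k < m, let (λ_i, u_i) be an exact eigenpair of A with μ_i = 1/λ_i, and assume δ_{k,i} := min_{k<j≤m} |μ̃_j − μ_i| > 0. Let E_{m,k} be the A-orthogonal projection onto span{ũ_1, …, ũ_k}. Then ‖(I − E_{m,k}) P_K u_i‖₂ ≤ (μ̃_{k+1}/δ_{k,i}) · ‖u_i − P_K u_i‖₂. -/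
open Matrix

set_option maxHeartbeats 1000000 in
/-- The estimate (3.32):
`‖(I − E_{m,k}) P_K u_i‖₂ ≤ (μ̃_{k+1}/δ_{k,i}) ‖u_i − P_K u_i‖₂`. -/
theorem stmt15 {n m : ℕ} (A : Matrix (Fin n) (Fin n) ℝ) (hA : A.PosDef)
    -- `K` is an `m`-dimensional subspace of `ℝⁿ`
    (K : Submodule ℝ (Fin n → ℝ)) (hK : Module.finrank ℝ K = m)
    -- `P` is the `A`-orthogonal (Galerkin) projection onto `K`
    (P : (Fin n → ℝ) →ₗ[ℝ] (Fin n → ℝ))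
    (hPmem : ∀ x, P x ∈ K)
    (hPproj : ∀ x, ∀ y ∈ K, (P x) ⬝ᵥ (A *ᵥ y) = x ⬝ᵥ (A *ᵥ y))
    -- the Ritz pairs `(λ̃_j, ũ_j)` of `A` on `K`, with `A`-orthonormal Ritz vectors
    (tlam : Fin m → ℝ) (tu : Fin m → (Fin n → ℝ)) (htmono : Monotone tlam)
    (htu : ∀ j, tu j ∈ K)
    (hRitz : ∀ j, ∀ v ∈ K, ((A *ᵥ tu j) - tlam j • tu j) ⬝ᵥ v = 0)
    (htortho : ∀ i j, tu i ⬝ᵥ (A *ᵥ tu j) = if i = j then (1 : ℝ) else 0)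
    -- `1 ≤ k < m`
    (k : ℕ) (hk : 1 ≤ k) (hkm : k < m)
    -- `(λ_i, u_i)` is an exact eigenpair of `A`
    (lam : ℝ) (u : Fin n → ℝ) (hu : u ≠ 0) (heig : A *ᵥ u = lam • u)
    -- `δ_{k,i} > 0` is (a lower bound for) `min_{k < j ≤ m} |μ̃_j − μ_i|`,
    -- where `μ_i = 1/λ_i`, `μ̃_j = 1/λ̃_j`
    (δ : ℝ) (hδpos : 0 < δ)
    (hδ : ∀ j : Fin m, k ≤ (j : ℕ) → δ ≤ |1 / tlam j - 1 / lam|)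
    -- `E` is the `A`-orthogonal projection `E_{m,k}` onto `span{ũ_1, …, ũ_k}`
    (E : (Fin n → ℝ) →ₗ[ℝ] (Fin n → ℝ))
    (hEmem : ∀ x, E x ∈
      Submodule.span ℝ (Set.range fun i : Fin k => tu (Fin.castLE hkm.le i)))
    (hEproj : ∀ x, ∀ y ∈
      Submodule.span ℝ (Set.range fun i : Fin k => tu (Fin.castLE hkm.le i)),
      (E x) ⬝ᵥ (A *ᵥ y) = x ⬝ᵥ (A *ᵥ y)) :
    l2N (P u - E (P u)) ≤ (1 / tlam ⟨k, hkm⟩) / δ * l2N (u - P u) := by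
  classical
  -- abbreviations
  set w : Fin n → ℝ := P u - E (P u) with hw
  set s : Fin n → ℝ := u - P u with hsdef
  set sp := Submodule.span ℝ (Set.range fun i : Fin k => tu (Fin.castLE hkm.le i)) with hsp
  -- basic sum helpers
  have dotSumRight : ∀ (x : Fin n → ℝ) (f : Fin m → Fin n → ℝ),
      x ⬝ᵥ (∑ i, f i) = ∑ i, x ⬝ᵥ f i := by
    intro x f
    simp only [dotProduct, Finset.sum_apply, Finset.mul_sum]
    exact Finset.sum_comm
  have sumDotLeft : ∀ (x : Fin n → ℝ) (f : Fin m → Fin n → ℝ),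
      (∑ i, f i) ⬝ᵥ x = ∑ i, f i ⬝ᵥ x := by
    intro x f
    simp only [dotProduct, Finset.sum_apply, Finset.sum_mul]
    exact Finset.sum_comm
  have mulVecSum : ∀ (f : Fin m → Fin n → ℝ), A *ᵥ (∑ i, f i) = ∑ i, A *ᵥ f i := by
    intro f; exact map_sum (mulVecLin A) f Finset.univ
  have dotSelfNonneg : ∀ x : Fin n → ℝ, 0 ≤ x ⬝ᵥ x := fun x =>
    Finset.sum_nonneg fun i _ => mul_self_nonneg _
  -- symmetry of A
  have hT : Aᵀ = A := by
    have := hA.isHermitian.eq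
    simpa [conjTranspose_eq_transpose_of_trivial] using this
  have hsymm : ∀ x y : Fin n → ℝ, x ⬝ᵥ (A *ᵥ y) = y ⬝ᵥ (A *ᵥ x) := by
    intro x y
    rw [dotProduct_mulVec, dotProduct_comm, ← mulVec_transpose, hT]
  -- positivity of Ritz values
  have hRitzK : ∀ j, ∀ v ∈ K, tu j ⬝ᵥ (A *ᵥ v) = tlam j * (tu j ⬝ᵥ v) := by
    intro j v hv
    have h0 := hRitz j v hv
    rw [sub_dotProduct, smul_dotProduct, sub_eq_zero] at h0
    rw [hsymm, dotProduct_comm, h0]; rfl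
  have hlampos : ∀ j, 0 < tlam j := by
    intro j
    have h1 : tu j ⬝ᵥ (A *ᵥ tu j) = tlam j * (tu j ⬝ᵥ tu j) := hRitzK j (tu j) (htu j)
    have h2 : tu j ⬝ᵥ (A *ᵥ tu j) = 1 := by simpa using htortho j j
    have h3 : tlam j * (tu j ⬝ᵥ tu j) = 1 := by rw [← h1, h2]
    nlinarith [dotSelfNonneg (tu j)]
  have hlamne : ∀ j, tlam j ≠ 0 := fun j => (hlampos j).ne'
  -- l² orthogonality of Ritz vectors
  have horth : ∀ i j, tu i ⬝ᵥ tu j = if i = j then 1 / tlam j else 0 := by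
    intro i j
    have h1 : tu j ⬝ᵥ (A *ᵥ tu i) = tlam j * (tu j ⬝ᵥ tu i) := hRitzK j (tu i) (htu i)
    have h2 : tu j ⬝ᵥ (A *ᵥ tu i) = if i = j then 1 else 0 := by
      rw [hsymm]; exact htortho i j
    have h3 : tlam j * (tu j ⬝ᵥ tu i) = if i = j then 1 else 0 := by rw [← h1, h2]
    rw [dotProduct_comm]
    by_cases hij : i = j
    · simp only [if_pos hij] at h3 ⊢
      rw [eq_div_iff (hlamne j), mul_comm]
      exact h3
    · simp only [if_neg hij] at h3 ⊢
      rcases mul_eq_zero.mp h3 with h | h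
      · exact absurd h (hlamne j)
      · exact h
  -- span of Ritz vectors is K
  have hLI : LinearIndependent ℝ tu := by
    apply Fintype.linearIndependent_iff.mpr
    intro g hg j
    have h1 : (∑ i, g i • tu i) ⬝ᵥ (A *ᵥ tu j) = 0 := by rw [hg]; simp
    rw [sumDotLeft] at h1
    simp only [smul_dotProduct, htortho, smul_eq_mul, mul_ite, mul_one, mul_zero] at h1
    simpa using h1
  have hspanK : Submodule.span ℝ (Set.range tu) = K := by
    apply Submodule.eq_of_le_of_finrank_le
    · rw [Submodule.span_le]; rintro _ ⟨j, rfl⟩; exact htu j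
    · rw [hK, finrank_span_eq_card hLI]; simp
  -- sp ≤ K
  have hspK : sp ≤ K := by
    rw [hsp, Submodule.span_le]; rintro _ ⟨i, rfl⟩; exact htu _
  have hwK : w ∈ K := K.sub_mem (hPmem u) (hspK (hEmem (P u)))
  -- expansion of w
  obtain ⟨c, hc⟩ : ∃ c : Fin m → ℝ, ∑ i, c i • tu i = w :=
    (Submodule.mem_span_range_iff_exists_fun ℝ).mp (hspanK ▸ hwK)
  set d : Fin m → ℝ := fun j => tu j ⬝ᵥ (A *ᵥ w) with hd
  have hdc : ∀ j, d j = c j := by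
    intro j
    have : d j = tu j ⬝ᵥ (A *ᵥ ∑ i, c i • tu i) := by rw [hc]
    rw [this, show (∑ i, c i • tu i) = ∑ i, (fun i => c i • tu i) i from rfl, mulVecSum,
      dotSumRight]
    simp only [mulVec_smul, dotProduct_smul, htortho, smul_eq_mul, mul_ite, mul_one, mul_zero]
    simp
  -- ‖w‖² in terms of coefficients
  have hww : w ⬝ᵥ w = ∑ j, (1 / tlam j) * (d j) ^ 2 := by
    have h1 : w ⬝ᵥ w = (∑ i, c i • tu i) ⬝ᵥ (∑ j, c j • tu j) := by rw [hc]
    rw [h1, sumDotLeft]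
    have h2 : ∀ i : Fin m, (c i • tu i) ⬝ᵥ (∑ j, c j • tu j)
        = (1 / tlam i) * (c i) ^ 2 := by
      intro i
      rw [smul_dotProduct, dotSumRight]
      simp only [dotProduct_smul, horth, smul_eq_mul, mul_ite, mul_one, mul_zero]
      simp only [Finset.sum_ite_eq, Finset.mem_univ, if_true]
      ring
    rw [Finset.sum_congr rfl fun i _ => h2 i]
    exact Finset.sum_congr rfl fun j _ => by rw [hdc j]
  -- d j = 0 for j < k
  have hEzero : ∀ j : Fin m, k ≤ (j : ℕ) → ∀ x ∈ sp, tu j ⬝ᵥ (A *ᵥ x) = 0 := by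
    intro j hj x hx
    induction hx using Submodule.span_induction with
    | mem x hx =>
        obtain ⟨i, rfl⟩ := hx
        rw [hsymm, htortho]
        have : (Fin.castLE hkm.le i : Fin m) ≠ j := by
          intro h
          have : (i : ℕ) = (j : ℕ) := by rw [← h]; rfl
          omega
        simp [this]
    | zero => simp
    | add x y _ _ hx hy => rw [mulVec_add, dotProduct_add, hx, hy, add_zero]
    | smul r x _ hx => rw [mulVec_smul, dotProduct_smul, hx, smul_zero]
  have hdlt : ∀ j : Fin m, (j : ℕ) < k → d j = 0 := by
    intro j hj
    have hmem : tu j ∈ sp := by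
      rw [hsp]
      apply Submodule.subset_span
      exact ⟨⟨(j : ℕ), hj⟩, by simp [Fin.castLE]⟩
    have h1 : E (P u) ⬝ᵥ (A *ᵥ tu j) = P u ⬝ᵥ (A *ᵥ tu j) := hEproj (P u) (tu j) hmem
    have h2 : tu j ⬝ᵥ (A *ᵥ E (P u)) = tu j ⬝ᵥ (A *ᵥ P u) := by
      rw [hsymm, h1, ← hsymm]
    rw [hd]
    show tu j ⬝ᵥ (A *ᵥ (P u - E (P u))) = 0
    rw [mulVec_sub, dotProduct_sub, h2, sub_self]
  -- d j = tu j ⬝ᵥ (A *ᵥ P u) for j ≥ k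
  have hdge : ∀ j : Fin m, k ≤ (j : ℕ) → d j = tu j ⬝ᵥ (A *ᵥ P u) := by
    intro j hj
    rw [hd]
    show tu j ⬝ᵥ (A *ᵥ (P u - E (P u))) = _
    rw [mulVec_sub, dotProduct_sub, hEzero j hj _ (hEmem (P u)), sub_zero]
  -- positivity of lam
  have hlam : 0 < lam := by
    have h1 : 0 < u ⬝ᵥ (A *ᵥ u) := by simpa using hA.dotProduct_mulVec_pos hu
    rw [heig, dotProduct_smul, smul_eq_mul] at h1
    have h2 : 0 < u ⬝ᵥ u := by
      rcases lt_or_eq_of_le (dotSelfNonneg u) with h | h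
      · exact h
      · exact absurd (dotProduct_self_eq_zero.mp h.symm) hu
    nlinarith
  -- relation between d j and tu j ⬝ᵥ s
  have hs : ∀ j : Fin m, k ≤ (j : ℕ) → tu j ⬝ᵥ s = (1 / lam - 1 / tlam j) * d j := by
    intro j hj
    have h1 : tu j ⬝ᵥ (A *ᵥ P u) = tu j ⬝ᵥ (A *ᵥ u) := by
      rw [hsymm, hPproj u (tu j) (htu j)]
      exact hsymm _ _
    have h2 : tu j ⬝ᵥ (A *ᵥ u) = lam * (tu j ⬝ᵥ u) := by
      rw [heig, dotProduct_smul]; rfl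
    have h3 : tu j ⬝ᵥ (A *ᵥ P u) = tlam j * (tu j ⬝ᵥ P u) := hRitzK j (P u) (hPmem u)
    have h4 := hdge j hj
    have h5 : tu j ⬝ᵥ u = d j / lam := by
      rw [h4, h1, h2, mul_comm, mul_div_assoc, div_self hlam.ne', mul_one]
    have h6 : tu j ⬝ᵥ P u = d j / tlam j := by
      rw [h4, h3, mul_comm, mul_div_assoc, div_self (hlamne j), mul_one]
    rw [hsdef]
    show tu j ⬝ᵥ (u - P u) = _
    rw [dotProduct_sub, h5, h6]
    field_simp
  -- Bessel inequality
  have hbessel : ∀ v : Fin n → ℝ, ∑ j, tlam j * (tu j ⬝ᵥ v) ^ 2 ≤ v ⬝ᵥ v := by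
    intro v
    have h0 := dotSelfNonneg (v - ∑ j, (tlam j * (tu j ⬝ᵥ v)) • tu j)
    have hx1 : v ⬝ᵥ (∑ j, (tlam j * (tu j ⬝ᵥ v)) • tu j)
        = ∑ j, tlam j * (tu j ⬝ᵥ v) ^ 2 := by
      rw [show (∑ j, (tlam j * (tu j ⬝ᵥ v)) • tu j)
          = ∑ j, (fun j => (tlam j * (tu j ⬝ᵥ v)) • tu j) j from rfl, dotSumRight]
      apply Finset.sum_congr rfl
      intro j _
      rw [dotProduct_smul, smul_eq_mul, dotProduct_comm]
      ring
    have hx2 : (∑ j, (tlam j * (tu j ⬝ᵥ v)) • tu j) ⬝ᵥ v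
        = ∑ j, tlam j * (tu j ⬝ᵥ v) ^ 2 := by rw [dotProduct_comm]; exact hx1
    have hx3 : (∑ j, (tlam j * (tu j ⬝ᵥ v)) • tu j) ⬝ᵥ (∑ j, (tlam j * (tu j ⬝ᵥ v)) • tu j)
        = ∑ j, tlam j * (tu j ⬝ᵥ v) ^ 2 := by
      rw [show (∑ j, (tlam j * (tu j ⬝ᵥ v)) • tu j)
          = ∑ j, (fun j => (tlam j * (tu j ⬝ᵥ v)) • tu j) j from rfl, sumDotLeft]
      apply Finset.sum_congr rfl
      intro j _
      rw [smul_dotProduct, dotSumRight]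
      simp only [dotProduct_smul, horth, smul_eq_mul, mul_ite, mul_one, mul_zero]
      simp only [Finset.sum_ite_eq, Finset.mem_univ, if_true]
      field_simp [hlamne j]
    have hexp : (v - ∑ j, (tlam j * (tu j ⬝ᵥ v)) • tu j) ⬝ᵥ
        (v - ∑ j, (tlam j * (tu j ⬝ᵥ v)) • tu j)
        = v ⬝ᵥ v - ∑ j, tlam j * (tu j ⬝ᵥ v) ^ 2 := by
      rw [sub_dotProduct, dotProduct_sub, dotProduct_sub, hx1, hx2, hx3]
      ring
    rw [hexp] at h0
    linarith
  -- termwise bound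
  set C : ℝ := (1 / tlam ⟨k, hkm⟩) / δ with hC
  have hCpos : 0 < C := by
    apply div_pos _ hδpos
    exact one_div_pos.mpr (hlampos ⟨k, hkm⟩)
  have hterm : ∀ j : Fin m, (1 / tlam j) * (d j) ^ 2
      ≤ C ^ 2 * (tlam j * (tu j ⬝ᵥ s) ^ 2) := by
    intro j
    by_cases hj : k ≤ (j : ℕ)
    · have hμle : 1 / tlam j ≤ 1 / tlam ⟨k, hkm⟩ := by
        apply one_div_le_one_div_of_le (hlampos ⟨k, hkm⟩)
        exact htmono (by exact hj)
      have habs : δ ≤ |1 / tlam j - 1 / lam| := hδ j hj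
      have hδ2 : δ ^ 2 ≤ (1 / lam - 1 / tlam j) ^ 2 := by
        have h1 : δ ^ 2 ≤ |1 / tlam j - 1 / lam| ^ 2 := by
          apply pow_le_pow_left₀ hδpos.le habs
        rw [sq_abs] at h1
        calc δ ^ 2 ≤ (1 / tlam j - 1 / lam) ^ 2 := h1
        _ = (1 / lam - 1 / tlam j) ^ 2 := by ring
      rw [hs j hj]
      have hp1 : 0 < tlam j := hlampos j
      have hp2 : 0 < 1 / tlam j := one_div_pos.mpr hp1
      have hp3 : 0 < 1 / tlam ⟨k, hkm⟩ := one_div_pos.mpr (hlampos ⟨k, hkm⟩)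
      have key : 1 / tlam j ≤ C ^ 2 * (tlam j * (1 / lam - 1 / tlam j) ^ 2) := by
        have e1 : C ^ 2 * (tlam j * (1 / lam - 1 / tlam j) ^ 2)
            ≥ C ^ 2 * (tlam j * δ ^ 2) := by
          apply mul_le_mul_of_nonneg_left _ (sq_nonneg C)
          exact mul_le_mul_of_nonneg_left hδ2 hp1.le
        have e2 : C ^ 2 * (tlam j * δ ^ 2) = (1 / tlam ⟨k, hkm⟩) ^ 2 * tlam j := by
          rw [hC]; field_simp [hδpos.ne']
        have e3 : 1 / tlam j ≤ (1 / tlam ⟨k, hkm⟩) ^ 2 * tlam j := by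
          have h4 : (1 / tlam j) ^ 2 ≤ (1 / tlam ⟨k, hkm⟩) ^ 2 :=
            pow_le_pow_left₀ hp2.le hμle 2
          have h5 : (1 / tlam j) ^ 2 * tlam j = 1 / tlam j := by
            field_simp
          nlinarith
        linarith [e1, e2 ▸ e1]
      calc (1 / tlam j) * (d j) ^ 2
          ≤ (C ^ 2 * (tlam j * (1 / lam - 1 / tlam j) ^ 2)) * (d j) ^ 2 :=
            mul_le_mul_of_nonneg_right key (sq_nonneg _)
        _ = C ^ 2 * (tlam j * ((1 / lam - 1 / tlam j) * d j) ^ 2) := by ring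
    · push_neg at hj
      rw [hdlt j hj]
      have : 0 ≤ C ^ 2 * (tlam j * (tu j ⬝ᵥ s) ^ 2) := by
        apply mul_nonneg (sq_nonneg C)
        exact mul_nonneg (hlampos j).le (sq_nonneg _)
      simpa using this
  -- put everything together
  have hfinal : w ⬝ᵥ w ≤ C ^ 2 * (s ⬝ᵥ s) := by
    calc w ⬝ᵥ w = ∑ j, (1 / tlam j) * (d j) ^ 2 := hww
      _ ≤ ∑ j, C ^ 2 * (tlam j * (tu j ⬝ᵥ s) ^ 2) :=
          Finset.sum_le_sum fun j _ => hterm j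
      _ = C ^ 2 * ∑ j, tlam j * (tu j ⬝ᵥ s) ^ 2 := by rw [Finset.mul_sum]
      _ ≤ C ^ 2 * (s ⬝ᵥ s) := mul_le_mul_of_nonneg_left (hbessel s) (sq_nonneg C)
  have : l2N w ≤ C * l2N s := by
    rw [l2N, l2N]
    calc Real.sqrt (w ⬝ᵥ w) ≤ Real.sqrt (C ^ 2 * (s ⬝ᵥ s)) := Real.sqrt_le_sqrt hfinal
      _ = C * Real.sqrt (s ⬝ᵥ s) := by
          rw [Real.sqrt_mul (sq_nonneg C), Real.sqrt_sq hCpos.le]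
  exact this
end

section
/- Let 1 ≤ n_c < n and let K := span{u_1, …, u_{n_c}} be the span of the eigenvectors corresponding to the smallest n_c eigenvalues of A. Then η_K := sup_{‖g‖₂=1} ‖(I − P_K) A^{-1} g‖_A ≤ √(μ_{n_c+1}) = 1/√(λ_{n_c+1}), where P_K is the A-orthogonal projection onto K and μ_j = 1/λ_j. -/
open Matrix

/-- Auxiliary: dot product is linear in a finite sum of scaled vectors. -/
lemma sum_smul_dotProduct' {n m : ℕ} (f : Fin m → ℝ) (v : Fin m → Fin n → ℝ)
    (w : Fin n → ℝ) :
    (∑ i, f i • v i) ⬝ᵥ w = ∑ i, f i * (v i ⬝ᵥ w) := by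
  simp only [dotProduct, Finset.sum_apply, Pi.smul_apply, smul_eq_mul,
    Finset.sum_mul, Finset.mul_sum]
  rw [Finset.sum_comm]
  exact Finset.sum_congr rfl fun i _ => Finset.sum_congr rfl fun j _ => by ring

/-- The estimate (6.1): if `K = span{u_1, …, u_{n_c}}` is spanned by the
eigenvectors corresponding to the smallest `n_c` eigenvalues of `A`, then
`η_K ≤ √(μ_{n_c+1}) = 1/√(λ_{n_c+1})`. -/
theorem stmt19 {n : ℕ} (A : Matrix (Fin n) (Fin n) ℝ) (hA : A.PosDef)
    -- the eigenvalues `λ_1 ≤ ⋯ ≤ λ_n` of `A` with `A`-orthonormal eigenvectors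
    (Λ : Fin n → ℝ) (U : Fin n → (Fin n → ℝ)) (hΛmono : Monotone Λ)
    (hUeig : ∀ i, A *ᵥ U i = Λ i • U i)
    (hUortho : ∀ i j, U i ⬝ᵥ (A *ᵥ U j) = if i = j then (1 : ℝ) else 0)
    -- `1 ≤ n_c < n` and `K = span{u_1, …, u_{n_c}}`
    (nc : ℕ) (hnc : 1 ≤ nc) (hncn : nc < n)
    (K : Submodule ℝ (Fin n → ℝ))
    (hKspan : K =
      Submodule.span ℝ (Set.range fun i : Fin nc => U (Fin.castLE hncn.le i)))
    -- `P` is the `A`-orthogonal (Galerkin) projection onto `K`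
    (P : (Fin n → ℝ) →ₗ[ℝ] (Fin n → ℝ))
    (hPmem : ∀ x, P x ∈ K)
    (hPproj : ∀ x, ∀ y ∈ K, (P x) ⬝ᵥ (A *ᵥ y) = x ⬝ᵥ (A *ᵥ y)) :
    etaK A P ≤ Real.sqrt (1 / Λ ⟨nc, hncn⟩) := by
  classical
  set M : Matrix (Fin n) (Fin n) ℝ := Matrix.of U with hM
  -- M * (A * Mᵀ) = 1
  have hMAMt : M * (A * Mᵀ) = 1 := by
    ext i j
    have h := hUortho i j
    simp only [Matrix.mul_apply, Matrix.mulVec, dotProduct,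
      Matrix.transpose_apply, Matrix.one_apply, hM, Matrix.of_apply] at h ⊢
    exact h
  have h2 : A * (Mᵀ * M) = 1 := by
    have := mul_eq_one_comm.mp hMAMt
    rw [mul_assoc] at this; exact this
  have hAinv : A⁻¹ = Mᵀ * M := Matrix.inv_eq_right_inv h2
  have hinvA_mul : A⁻¹ * A = 1 := by
    rw [hAinv]; exact mul_eq_one_comm.mp h2
  have hA_invA : A * A⁻¹ = 1 := by rw [hAinv]; exact h2
  -- expansion of A⁻¹ in outer products
  have hexp : ∀ x : Fin n → ℝ, A⁻¹ *ᵥ x = ∑ i, (U i ⬝ᵥ x) • U i := by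
    intro x
    rw [hAinv]
    funext j
    simp only [Matrix.mulVec, dotProduct, Matrix.mul_apply,
      Matrix.transpose_apply, hM, Matrix.of_apply, Finset.sum_apply,
      Pi.smul_apply, smul_eq_mul, Finset.sum_mul, Finset.mul_sum]
    rw [Finset.sum_comm]
    exact Finset.sum_congr rfl fun i _ => Finset.sum_congr rfl fun k _ => by ring
  -- eigenvalues are positive
  have hUU : ∀ i, 0 ≤ U i ⬝ᵥ U i := fun i =>
    Finset.sum_nonneg fun k _ => mul_self_nonneg _
  have hΛpos : ∀ i, 0 < Λ i := by
    intro i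
    have h := hUortho i i
    rw [hUeig i, if_pos rfl] at h
    have h' : Λ i * (U i ⬝ᵥ U i) = 1 := by
      simpa [dotProduct_smul, smul_eq_mul] using h
    nlinarith [hUU i]
  -- symmetry of the bilinear form
  have hAsymm : Aᵀ = A := by
    ext i j
    have h := congrFun (congrFun hA.1.eq i) j
    simpa [Matrix.conjTranspose_apply] using h
  have hsym : ∀ x y : Fin n → ℝ, x ⬝ᵥ (A *ᵥ y) = y ⬝ᵥ (A *ᵥ x) := by
    intro x y
    rw [Matrix.dotProduct_mulVec, ← Matrix.mulVec_transpose, hAsymm,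
      dotProduct_comm]
  have hΛnc : 0 < Λ ⟨nc, hncn⟩ := hΛpos _
  apply Real.sSup_le
  · rintro x ⟨g, hg, rfl⟩
    have hgg : g ⬝ᵥ g = 1 := Real.sqrt_eq_one.mp hg
    set v : Fin n → ℝ := A⁻¹ *ᵥ g with hv
    set e : Fin n → ℝ := v - P v with he
    have hAv : A *ᵥ v = g := by
      rw [hv, Matrix.mulVec_mulVec, hA_invA, Matrix.one_mulVec]
    have horth : ∀ y ∈ K, e ⬝ᵥ (A *ᵥ y) = 0 := by
      intro y hy
      rw [he, sub_dotProduct, hPproj v y hy, sub_self]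
    set c : Fin n → ℝ := fun i => e ⬝ᵥ (A *ᵥ U i) with hc
    have hc0 : ∀ i : Fin n, (i : ℕ) < nc → c i = 0 := by
      intro i hi
      have hmem : U i ∈ K := by
        rw [hKspan]
        exact Submodule.subset_span ⟨⟨i.1, hi⟩, by congr 1⟩
      exact horth _ hmem
    have hee : e = ∑ i, c i • U i := by
      have h1 : e = A⁻¹ *ᵥ (A *ᵥ e) := by
        rw [Matrix.mulVec_mulVec, hinvA_mul, Matrix.one_mulVec]
      have h2' : A⁻¹ *ᵥ (A *ᵥ e) = ∑ i, c i • U i := by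
        rw [hexp]
        exact Finset.sum_congr rfl fun i _ => by rw [hc, hsym]
      exact h1.trans h2'
    have heUi : ∀ i, e ⬝ᵥ U i = c i / Λ i := by
      intro i
      have h1 : c i = Λ i * (e ⬝ᵥ U i) := by
        show e ⬝ᵥ (A *ᵥ U i) = _
        rw [hUeig i, dotProduct_smul, smul_eq_mul]
      rw [h1, mul_div_cancel_left₀ _ (hΛpos i).ne']
    have heAe : e ⬝ᵥ (A *ᵥ e) = ∑ i, c i ^ 2 := by
      nth_rewrite 1 [hee]
      rw [sum_smul_dotProduct']
      refine Finset.sum_congr rfl fun i _ => ?_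
      rw [hsym]
      show c i * c i = c i ^ 2
      ring
    have hl2 : e ⬝ᵥ e = ∑ i, c i ^ 2 / Λ i := by
      nth_rewrite 1 [hee]
      rw [sum_smul_dotProduct']
      refine Finset.sum_congr rfl fun i _ => ?_
      rw [dotProduct_comm, heUi i]
      ring
    have hs0 : 0 ≤ e ⬝ᵥ (A *ᵥ e) := by
      rw [heAe]
      exact Finset.sum_nonneg fun i _ => sq_nonneg _
    have hseg : e ⬝ᵥ (A *ᵥ e) = e ⬝ᵥ g := by
      have h0 : e ⬝ᵥ (A *ᵥ P v) = 0 := horth _ (hPmem v)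
      have h1 : A *ᵥ e = g - A *ᵥ P v := by
        rw [he, Matrix.mulVec_sub, hAv]
      rw [h1, dotProduct_sub, h0, sub_zero]
    have hCS : (e ⬝ᵥ (A *ᵥ e)) ^ 2 ≤ e ⬝ᵥ e := by
      rw [hseg]
      calc (e ⬝ᵥ g) ^ 2 ≤ (∑ i, e i ^ 2) * (∑ i, g i ^ 2) :=
            Finset.sum_mul_sq_le_sq_mul_sq Finset.univ e g
        _ = (e ⬝ᵥ e) * (g ⬝ᵥ g) := by
            simp [dotProduct, sq]
        _ = e ⬝ᵥ e := by rw [hgg, mul_one]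
    have hbound : e ⬝ᵥ e ≤ (e ⬝ᵥ (A *ᵥ e)) / Λ ⟨nc, hncn⟩ := by
      rw [hl2, heAe, Finset.sum_div]
      apply Finset.sum_le_sum
      intro i _
      by_cases hi : (i : ℕ) < nc
      · rw [hc0 i hi]
        simp
      · have hle : Λ ⟨nc, hncn⟩ ≤ Λ i := hΛmono (by
          simp only [Fin.le_def]
          omega)
        have hΛi := hΛpos i
        rw [div_le_div_iff₀ hΛi hΛnc]
        nlinarith [sq_nonneg (c i)]
    have hs1 : e ⬝ᵥ (A *ᵥ e) ≤ 1 / Λ ⟨nc, hncn⟩ := by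
      rcases eq_or_lt_of_le hs0 with h | h
      · rw [← h]
        positivity
      · have h3 : (e ⬝ᵥ (A *ᵥ e)) ^ 2 ≤ (e ⬝ᵥ (A *ᵥ e)) / Λ ⟨nc, hncn⟩ :=
          le_trans hCS hbound
        have h3' := (le_div_iff₀ hΛnc).mp h3
        rw [le_div_iff₀ hΛnc]
        nlinarith [h3', h, hΛnc]
    show Real.sqrt (e ⬝ᵥ (A *ᵥ e)) ≤ Real.sqrt (1 / Λ ⟨nc, hncn⟩)
    exact Real.sqrt_le_sqrt hs1
  · exact Real.sqrt_nonneg _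
end
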